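/- For any complex numbers u, v on the closed unit disc, |2u - v - 1| / (|2 - u| · |3 - v|) ≤ 2/3. -/

import Mathlib

theorem lambda_diff_bound (u v : ℂ) (hu : ‖u‖ ≤ 1) (hv : ‖v‖ ≤ 1) :
    ‖2 * u - v - 1‖ / (‖2 - u‖ * ‖3 - v‖) ≤ 2 / 3 := by
  have hu0 : 0 ≤ ‖u‖ := norm_nonneg u
  have hv0 : 0 ≤ ‖v‖ := norm_nonneg v
  -- ‖2u - 1‖ ≤ ‖2 - u‖
  have L1 : ‖2 * u - 1‖ ≤ ‖2 - u‖ := by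
    have h1 : ‖2 * u - 1‖ ^ 2 ≤ ‖2 - u‖ ^ 2 := by
      have e1 : ‖2 * u - 1‖ ^ 2 = (2 * u.re - 1) ^ 2 + (2 * u.im) ^ 2 := by
        rw [Complex.sq_norm, Complex.normSq_apply]
        simp [Complex.sub_re, Complex.sub_im, Complex.mul_re, Complex.mul_im]
        ring
      have e2 : ‖2 - u‖ ^ 2 = (2 - u.re) ^ 2 + u.im ^ 2 := by
        rw [Complex.sq_norm, Complex.normSq_apply]
        simp [Complex.sub_re, Complex.sub_im]
        ring
      have hu2 : u.re ^ 2 + u.im ^ 2 ≤ 1 := by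
        have h := Complex.sq_norm u
        rw [Complex.normSq_apply] at h
        nlinarith
      rw [e1, e2]; nlinarith
    nlinarith [norm_nonneg (2 * u - 1), norm_nonneg (2 - u)]
  -- ‖3v - 1‖ ≤ ‖3 - v‖
  have L2 : ‖3 * v - 1‖ ≤ ‖3 - v‖ := by
    have h1 : ‖3 * v - 1‖ ^ 2 ≤ ‖3 - v‖ ^ 2 := by
      have e1 : ‖3 * v - 1‖ ^ 2 = (3 * v.re - 1) ^ 2 + (3 * v.im) ^ 2 := by
        rw [Complex.sq_norm, Complex.normSq_apply]
        simp [Complex.sub_re, Complex.sub_im, Complex.mul_re, Complex.mul_im]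
        ring
      have e2 : ‖3 - v‖ ^ 2 = (3 - v.re) ^ 2 + v.im ^ 2 := by
        rw [Complex.sq_norm, Complex.normSq_apply]
        simp [Complex.sub_re, Complex.sub_im]
        ring
      have hv2 : v.re ^ 2 + v.im ^ 2 ≤ 1 := by
        have h := Complex.sq_norm v
        rw [Complex.normSq_apply] at h
        nlinarith
      rw [e1, e2]; nlinarith
    nlinarith [norm_nonneg (3 * v - 1), norm_nonneg (3 - v)]
  have hB : (1:ℝ) ≤ ‖2 - u‖ := by
    have h := norm_sub_norm_le (2 : ℂ) u
    have h2 : ‖(2:ℂ)‖ = 2 := by norm_num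
    rw [h2] at h; linarith
  have hC : (2:ℝ) ≤ ‖3 - v‖ := by
    have h := norm_sub_norm_le (3 : ℂ) v
    have h2 : ‖(3:ℂ)‖ = 3 := by norm_num
    rw [h2] at h; linarith
  have hden : 0 < ‖2 - u‖ * ‖3 - v‖ := by positivity
  rw [div_le_iff₀ hden]
  -- decomposition
  have key : 2 * u - v - 1
      = (1/3 : ℂ) * ((3 - v) * (2 * u - 1)) - (1/4 : ℂ) * ((2 - u) * (3 * v - 1))
        - (1/12 : ℂ) * ((2 - u) * (3 - v)) := by ring
  calc ‖2 * u - v - 1‖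
      = ‖(1/3 : ℂ) * ((3 - v) * (2 * u - 1)) - (1/4 : ℂ) * ((2 - u) * (3 * v - 1))
          - (1/12 : ℂ) * ((2 - u) * (3 - v))‖ := by rw [key]
    _ ≤ ‖(1/3 : ℂ) * ((3 - v) * (2 * u - 1)) - (1/4 : ℂ) * ((2 - u) * (3 * v - 1))‖
          + ‖(1/12 : ℂ) * ((2 - u) * (3 - v))‖ := norm_sub_le _ _
    _ ≤ ‖(1/3 : ℂ) * ((3 - v) * (2 * u - 1))‖ + ‖(1/4 : ℂ) * ((2 - u) * (3 * v - 1))‖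
          + ‖(1/12 : ℂ) * ((2 - u) * (3 - v))‖ :=
            by gcongr; exact norm_sub_le _ _
    _ = (1/3) * (‖3 - v‖ * ‖2 * u - 1‖) + (1/4) * (‖2 - u‖ * ‖3 * v - 1‖)
          + (1/12) * (‖2 - u‖ * ‖3 - v‖) := by
            simp [norm_mul]
    _ ≤ (1/3) * (‖3 - v‖ * ‖2 - u‖) + (1/4) * (‖2 - u‖ * ‖3 - v‖)
          + (1/12) * (‖2 - u‖ * ‖3 - v‖) := by
            have t1 : ‖3 - v‖ * ‖2 * u - 1‖ ≤ ‖3 - v‖ * ‖2 - u‖ :=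
              mul_le_mul_of_nonneg_left L1 (norm_nonneg _)
            have t2 : ‖2 - u‖ * ‖3 * v - 1‖ ≤ ‖2 - u‖ * ‖3 - v‖ :=
              mul_le_mul_of_nonneg_left L2 (norm_nonneg _)
            linarith
    _ = 2 / 3 * (‖2 - u‖ * ‖3 - v‖) := by ring
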